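/- If W* with all rows in the interior of the simplex Δ_K minimizes f(W) = -(1/B)Σ w_{ij} log p_{ij} + ((1-β)/B)Σ w_{ij} log w_{ij} + β Σ_j w̄_j log w̄_j over W with rows in Δ_K, then for all i,j: w*_{ij} = (w̄*_j)^{-β/(1-β)} p_{ij}^{1/(1-β)} / Σ_{k=1}^K (w̄*_k)^{-β/(1-β)} p_{ik}^{1/(1-β)}. -/

import Mathlib

open Finset Real

private lemma mul_log_deriv (a d : ℝ) (ha : 0 < a) :
    HasDerivAt (fun t : ℝ => (a + t * d) * Real.log (a + t * d)) (d * (Real.log a + 1)) 0 := by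
  have h1 : HasDerivAt (fun t : ℝ => a + t * d) d 0 := by
    simpa using ((hasDerivAt_id (0 : ℝ)).mul_const d).const_add a
  have h2 : HasDerivAt (fun x : ℝ => x * Real.log x) (Real.log a + 1) (a + 0 * d) := by
    have h : a + 0 * d = a := by ring
    rw [h]; exact Real.hasDerivAt_mul_log (ne_of_gt ha)
  simpa [Function.comp_def, mul_comm] using h2.comp 0 h1

private lemma lin_deriv (a L d : ℝ) (c : Prop) [Decidable c] :
    HasDerivAt (fun t : ℝ => (a + if c then t * d else 0) * L) ((if c then d else 0) * L) 0 := by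
  split_ifs with h
  · have h1 : HasDerivAt (fun t : ℝ => a + t * d) d 0 := by
      simpa using ((hasDerivAt_id (0 : ℝ)).mul_const d).const_add a
    exact h1.mul_const L
  · simpa using hasDerivAt_const (0 : ℝ) ((a + 0) * L)

private lemma ent_deriv (a d : ℝ) (ha : 0 < a) (c : Prop) [Decidable c] :
    HasDerivAt
      (fun t : ℝ => (a + if c then t * d else 0) * Real.log (a + if c then t * d else 0))
      ((if c then d else 0) * (Real.log a + 1)) 0 := by
  split_ifs with h
  · exact mul_log_deriv a d ha
  · simpa using hasDerivAt_const (0 : ℝ) ((a + 0) * Real.log (a + 0))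

private def dvec (K : ℕ) (j l : Fin K) : Fin K → ℝ :=
  fun k => (if k = j then 1 else 0) - (if k = l then 1 else 0)

private def pert (B K : ℕ) (W : Fin B → Fin K → ℝ) (i : Fin B) (j l : Fin K) (t : ℝ) :
    Fin B → Fin K → ℝ :=
  fun i' k => W i' k + if i' = i then t * dvec K j l k else 0

private lemma key_lemma (B K : ℕ) (hB : 0 < B)
    (β : ℝ) (hβ1 : β < 1)
    (P : Fin B → Fin K → ℝ) (hP : ∀ i j, 0 < P i j)
    (f : (Fin B → Fin K → ℝ) → ℝ)
    (hf : ∀ W, f W =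
      -(1 / (B : ℝ)) * ∑ i, ∑ j, W i j * Real.log (P i j)
        + ((1 - β) / (B : ℝ)) * ∑ i, ∑ j, W i j * Real.log (W i j)
        + β * ∑ j, ((1 / (B : ℝ)) * ∑ i, W i j) *
            Real.log ((1 / (B : ℝ)) * ∑ i, W i j))
    (W : Fin B → Fin K → ℝ)
    (hWpos : ∀ i j, 0 < W i j) (hWsum : ∀ i, ∑ j, W i j = 1)
    (hmin : ∀ V : Fin B → Fin K → ℝ,
      (∀ i j, 0 ≤ V i j) → (∀ i, ∑ j, V i j = 1) → f W ≤ f V)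
    (i : Fin B) (j l : Fin K) (hjl : j ≠ l) :
    (1 - β) * Real.log (W i j) - Real.log (P i j)
        + β * Real.log ((1 / (B : ℝ)) * ∑ i', W i' j)
      = (1 - β) * Real.log (W i l) - Real.log (P i l)
        + β * Real.log ((1 / (B : ℝ)) * ∑ i', W i' l) := by
  haveI : Nonempty (Fin B) := ⟨⟨0, hB⟩⟩
  have hBpos : (0 : ℝ) < B := by exact_mod_cast hB
  have hB0 : (B : ℝ) ≠ 0 := ne_of_gt hBpos
  have hwbar : ∀ k, 0 < (1 / (B : ℝ)) * ∑ i', W i' k := by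
    intro k
    have : 0 < ∑ i', W i' k :=
      Finset.sum_pos (fun i' _ => hWpos i' k) Finset.univ_nonempty
    positivity
  have hcol : ∀ (t : ℝ) (k : Fin K),
      (1 / (B : ℝ)) * ∑ i', pert B K W i j l t i' k
        = (1 / (B : ℝ)) * (∑ i', W i' k) + t * (dvec K j l k * (1 / (B : ℝ))) := by
    intro t k
    simp only [pert, Finset.sum_add_distrib, Finset.sum_ite_eq' Finset.univ i,
      Finset.mem_univ, if_true]
    ring
  have hφ : ∀ t : ℝ, f (pert B K W i j l t) =
      -(1 / (B : ℝ)) * ∑ i', ∑ k,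
          (W i' k + if i' = i then t * dvec K j l k else 0) * Real.log (P i' k)
        + ((1 - β) / (B : ℝ)) * ∑ i', ∑ k,
          (W i' k + if i' = i then t * dvec K j l k else 0) *
            Real.log (W i' k + if i' = i then t * dvec K j l k else 0)
        + β * ∑ k,
          ((1 / (B : ℝ)) * (∑ i', W i' k) + t * (dvec K j l k * (1 / (B : ℝ)))) *
            Real.log ((1 / (B : ℝ)) * (∑ i', W i' k)
              + t * (dvec K j l k * (1 / (B : ℝ)))) := by
    intro t
    rw [hf]
    simp only [hcol]
    rfl
  have hpert0 : pert B K W i j l 0 = W := by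
    funext i' k; simp [pert]
  have hlocmin : IsLocalMin (fun t => f (pert B K W i j l t)) 0 := by
    have hε : 0 < min (W i j) (W i l) := lt_min (hWpos i j) (hWpos i l)
    have hmem : Set.Icc (-(min (W i j) (W i l))) (min (W i j) (W i l)) ∈ nhds (0 : ℝ) :=
      Icc_mem_nhds (by linarith) hε
    refine Filter.eventually_of_mem hmem ?_
    intro t ht
    simp only [hpert0]
    refine hmin _ ?_ ?_
    · intro i' k
      simp only [pert]
      by_cases h : i' = i
      · rw [h, if_pos rfl]
        by_cases hkj : k = j
        · have hdv : dvec K j l k = 1 := by simp [dvec, hkj, hjl]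
          rw [hdv, mul_one, hkj]
          have h1 : min (W i j) (W i l) ≤ W i j := min_le_left _ _
          linarith [ht.1]
        · by_cases hkl : k = l
          · have hdv : dvec K j l k = -1 := by simp [dvec, hkj, hkl, Ne.symm hjl]
            rw [hdv, hkl]
            have h1 : min (W i j) (W i l) ≤ W i l := min_le_right _ _
            have h2 := ht.2
            nlinarith
          · have hdv : dvec K j l k = 0 := by simp [dvec, hkj, hkl]
            rw [hdv, mul_zero]
            simpa using le_of_lt (hWpos i k)
      · simp [h, le_of_lt (hWpos i' k)]
    · intro i'
      have hd : ∑ k, dvec K j l k = 0 := by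
        simp [dvec, Finset.sum_sub_distrib, Finset.sum_ite_eq']
      simp only [pert, Finset.sum_add_distrib, hWsum]
      by_cases h : i' = i <;> simp [h, ← Finset.mul_sum, hd]
  have hderiv : HasDerivAt (fun t => f (pert B K W i j l t))
      (-(1 / (B : ℝ)) * (∑ i', ∑ k, (if i' = i then dvec K j l k else 0) * Real.log (P i' k))
        + ((1 - β) / (B : ℝ)) * (∑ i', ∑ k,
            (if i' = i then dvec K j l k else 0) * (Real.log (W i' k) + 1))
        + β * (∑ k, (dvec K j l k * (1 / (B : ℝ))) *
            (Real.log ((1 / (B : ℝ)) * ∑ i', W i' k) + 1))) 0 := by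
    have h1 : HasDerivAt (fun t : ℝ => ∑ i', ∑ k,
        (W i' k + if i' = i then t * dvec K j l k else 0) * Real.log (P i' k))
        (∑ i', ∑ k, (if i' = i then dvec K j l k else 0) * Real.log (P i' k)) 0 :=
      HasDerivAt.fun_sum fun i' _ => HasDerivAt.fun_sum fun k _ =>
        lin_deriv (W i' k) (Real.log (P i' k)) (dvec K j l k) (i' = i)
    have h2 : HasDerivAt (fun t : ℝ => ∑ i', ∑ k,
        (W i' k + if i' = i then t * dvec K j l k else 0) *
          Real.log (W i' k + if i' = i then t * dvec K j l k else 0))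
        (∑ i', ∑ k, (if i' = i then dvec K j l k else 0) * (Real.log (W i' k) + 1)) 0 :=
      HasDerivAt.fun_sum fun i' _ => HasDerivAt.fun_sum fun k _ =>
        ent_deriv (W i' k) (dvec K j l k) (hWpos i' k) (i' = i)
    have h3 : HasDerivAt (fun t : ℝ => ∑ k,
        ((1 / (B : ℝ)) * (∑ i', W i' k) + t * (dvec K j l k * (1 / (B : ℝ)))) *
          Real.log ((1 / (B : ℝ)) * (∑ i', W i' k) + t * (dvec K j l k * (1 / (B : ℝ)))))
        (∑ k, (dvec K j l k * (1 / (B : ℝ))) *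
          (Real.log ((1 / (B : ℝ)) * ∑ i', W i' k) + 1)) 0 :=
      HasDerivAt.fun_sum fun k _ =>
        mul_log_deriv ((1 / (B : ℝ)) * ∑ i', W i' k) (dvec K j l k * (1 / (B : ℝ))) (hwbar k)
    have hsum := ((h1.const_mul (-(1 / (B : ℝ)))).add
      (h2.const_mul ((1 - β) / (B : ℝ)))).add (h3.const_mul β)
    refine HasDerivAt.congr_of_eventuallyEq hsum ?_
    filter_upwards with t
    exact hφ t
  have hzero := hlocmin.hasDerivAt_eq_zero hderiv
  have sum_e : ∀ g : Fin B → Fin K → ℝ,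
      (∑ i', ∑ k, (if i' = i then dvec K j l k else 0) * g i' k) = ∑ k, dvec K j l k * g i k := by
    intro g
    rw [Finset.sum_eq_single i]
    · simp
    · intro b _ hb; simp [hb]
    · simp
  have sum_d : ∀ g : Fin K → ℝ, (∑ k, dvec K j l k * g k) = g j - g l := by
    intro g
    simp [dvec, sub_mul, Finset.sum_sub_distrib, ite_mul, Finset.sum_ite_eq']
  have h3' : (∑ k, (dvec K j l k * (1 / (B : ℝ))) *
        (Real.log ((1 / (B : ℝ)) * ∑ i', W i' k) + 1))
      = ∑ k, dvec K j l k *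
        ((1 / (B : ℝ)) * (Real.log ((1 / (B : ℝ)) * ∑ i', W i' k) + 1)) :=
    Finset.sum_congr rfl fun k _ => by ring
  rw [sum_e, sum_e, sum_d, sum_d, h3', sum_d] at hzero
  have hz2 : -(Real.log (P i j) - Real.log (P i l))
      + (1 - β) * (Real.log (W i j) + 1 - (Real.log (W i l) + 1))
      + β * ((Real.log ((1 / (B : ℝ)) * ∑ i', W i' j) + 1)
          - (Real.log ((1 / (B : ℝ)) * ∑ i', W i' l) + 1)) = 0 := by
    have hne : (1 : ℝ) / (B : ℝ) ≠ 0 := one_div_ne_zero hB0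
    apply mul_left_cancel₀ hne
    rw [mul_zero]
    linear_combination hzero
  linear_combination hz2

private lemma ratio_lemma (K : ℕ) (w q : Fin K → ℝ) (hq : ∀ k, 0 < q k)
    (hsum : ∑ k, w k = 1)
    (hrat : ∀ k k', w k * q k' = w k' * q k) :
    ∀ k, w k = q k / ∑ k', q k' := by
  intro k
  have hQ : 0 < ∑ k', q k' :=
    Finset.sum_pos (fun k' _ => hq k') ⟨k, Finset.mem_univ k⟩
  have h1 : w k * ∑ k', q k' = q k := by
    rw [Finset.mul_sum]
    calc ∑ k', w k * q k' = ∑ k', w k' * q k :=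
          Finset.sum_congr rfl fun k' _ => hrat k k'
      _ = (∑ k', w k') * q k := by rw [Finset.sum_mul]
      _ = q k := by rw [hsum, one_mul]
  rw [eq_div_iff hQ.ne']
  exact h1

/-- KKT condition: if `W*` with strictly positive rows summing to one minimizes the
MIRA objective over matrices with rows in the simplex, then
`w*ᵢⱼ = (w̄*ⱼ)^(-β/(1-β)) pᵢⱼ^(1/(1-β)) / ∑ₖ (w̄*ₖ)^(-β/(1-β)) pᵢₖ^(1/(1-β))`. -/
theorem stmt_8 (B K : ℕ) (hB : 0 < B) (hK : 0 < K)
    (β : ℝ) (hβ0 : 0 ≤ β) (hβ1 : β < 1)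
    (P : Fin B → Fin K → ℝ) (hP : ∀ i j, 0 < P i j)
    (f : (Fin B → Fin K → ℝ) → ℝ)
    (hf : ∀ W, f W =
      -(1 / (B : ℝ)) * ∑ i, ∑ j, W i j * Real.log (P i j)
        + ((1 - β) / (B : ℝ)) * ∑ i, ∑ j, W i j * Real.log (W i j)
        + β * ∑ j, ((1 / (B : ℝ)) * ∑ i, W i j) *
            Real.log ((1 / (B : ℝ)) * ∑ i, W i j))
    (W : Fin B → Fin K → ℝ)
    (hWpos : ∀ i j, 0 < W i j) (hWsum : ∀ i, ∑ j, W i j = 1)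
    (hmin : ∀ V : Fin B → Fin K → ℝ,
      (∀ i j, 0 ≤ V i j) → (∀ i, ∑ j, V i j = 1) → f W ≤ f V) :
    ∀ i j, W i j =
      ((1 / (B : ℝ)) * ∑ i', W i' j) ^ (-β / (1 - β)) * P i j ^ ((1 : ℝ) / (1 - β)) /
        ∑ k, ((1 / (B : ℝ)) * ∑ i', W i' k) ^ (-β / (1 - β)) *
          P i k ^ ((1 : ℝ) / (1 - β)) := by
  intro i j
  haveI : Nonempty (Fin B) := ⟨⟨0, hB⟩⟩
  have h1βpos : (0 : ℝ) < 1 - β := by linarith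
  have h1β : (1 : ℝ) - β ≠ 0 := ne_of_gt h1βpos
  have hwbar : ∀ k, 0 < (1 / (B : ℝ)) * ∑ i', W i' k := by
    intro k
    have h0 : 0 < ∑ i', W i' k :=
      Finset.sum_pos (fun i' _ => hWpos i' k) Finset.univ_nonempty
    have hBpos : (0 : ℝ) < B := by exact_mod_cast hB
    positivity
  set q : Fin K → ℝ := fun k =>
    ((1 / (B : ℝ)) * ∑ i', W i' k) ^ (-β / (1 - β)) * P i k ^ ((1 : ℝ) / (1 - β))
    with hq_def
  have hq : ∀ k, 0 < q k := fun k =>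
    mul_pos (Real.rpow_pos_of_pos (hwbar k) _) (Real.rpow_pos_of_pos (hP i k) _)
  have hlq : ∀ k, (1 - β) * Real.log (q k)
      = -β * Real.log ((1 / (B : ℝ)) * ∑ i', W i' k) + Real.log (P i k) := by
    intro k
    rw [hq_def]
    rw [Real.log_mul (Real.rpow_pos_of_pos (hwbar k) _).ne'
        (Real.rpow_pos_of_pos (hP i k) _).ne',
      Real.log_rpow (hwbar k), Real.log_rpow (hP i k)]
    field_simp
  have hrat : ∀ k k', W i k * q k' = W i k' * q k := by
    intro k k'
    by_cases hkk : k = k'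
    · rw [hkk]
    · have key := key_lemma B K hB β hβ1 P hP f hf W hWpos hWsum hmin i k k' hkk
      have hlog : Real.log (W i k * q k') = Real.log (W i k' * q k) := by
        rw [Real.log_mul (hWpos i k).ne' (hq k').ne',
          Real.log_mul (hWpos i k').ne' (hq k).ne']
        apply mul_left_cancel₀ h1β
        linear_combination key + hlq k' - hlq k
      have := congrArg Real.exp hlog
      rwa [Real.exp_log (mul_pos (hWpos i k) (hq k')),
        Real.exp_log (mul_pos (hWpos i k') (hq k))] at this
  have := ratio_lemma K (fun k => W i k) q hq (hWsum i) hrat j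
  exact this
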